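/- Let p ≥ 1 be an integer, let T be an inverse Gaussian random variable with parameters ν = λ/μ and κ = λ²/σ² (λ, μ, σ > 0), let Z be a standard Gaussian vector in ℝᵖ independent of T, and set N = σ√T · Z. Then the characteristic function of N is Φ_N(ω) = exp(−λ(sqrt(u² + ‖ω‖²) − u)) for all ω ∈ ℝᵖ, where u = μ/σ². -/

import Mathlib

open MeasureTheory Real ProbabilityTheory

/-- The inverse Gaussian density `IG(ν, κ)` on `(0, ∞)` (extended by `0` elsewhere). -/
noncomputable def igDensity (ν κ t : ℝ) : ℝ :=
  if 0 < t then
    Real.sqrt (κ / (2 * π * t ^ 3)) * Real.exp (-(κ * (t - ν) ^ 2) / (2 * ν ^ 2 * t))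
  else 0

open Set Complex
open scoped ENNReal NNReal

section Aux

lemma image_sub_div {d : ℝ} (hd : 0 < d) :
    (fun x : ℝ => x - d / x) '' Set.Ioi 0 = Set.univ := by
  apply Set.eq_univ_of_forall
  intro y
  set s := Real.sqrt (y ^ 2 + 4 * d) with hs
  have hs2 : s ^ 2 = y ^ 2 + 4 * d := Real.sq_sqrt (by positivity)
  have hsy : -y < s := by
    rcases le_or_gt y 0 with h | h
    · have : 0 < s := Real.sqrt_pos.mpr (by nlinarith)
      nlinarith [Real.sqrt_nonneg (y ^ 2 + 4 * d)]
    · linarith [Real.sqrt_nonneg (y ^ 2 + 4 * d)]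
  have hx : 0 < (y + s) / 2 := by linarith
  have hys : y + s ≠ 0 := by intro h; rw [h] at hx; simp at hx
  refine ⟨(y + s) / 2, hx, ?_⟩
  show (y + s) / 2 - d / ((y + s) / 2) = y
  rw [div_sub_div _ _ (two_ne_zero) (ne_of_gt hx), div_eq_iff (by positivity)]
  nlinarith

lemma hasDeriv_sub_div {d x : ℝ} (hx : x ∈ Set.Ioi (0:ℝ)) :
    HasDerivWithinAt (fun x : ℝ => x - d / x) (1 + d / x ^ 2) (Set.Ioi 0) x := by
  have hx0 : x ≠ 0 := ne_of_gt hx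
  have h : HasDerivAt (fun x : ℝ => x - d / x) (1 - (0 * x - d * 1) / x ^ 2) x :=
    (hasDerivAt_id x).sub ((hasDerivAt_const x d).div (hasDerivAt_id x) hx0)
  have : 1 - (0 * x - d * 1) / x ^ 2 = 1 + d / x ^ 2 := by ring
  exact (this ▸ h).hasDerivWithinAt

lemma injOn_sub_div {d : ℝ} (hd : 0 < d) :
    Set.InjOn (fun x : ℝ => x - d / x) (Set.Ioi 0) := by
  intro a ha b hb h
  simp only [Set.mem_Ioi] at ha hb
  simp only at h
  have habne : a ≠ 0 := ne_of_gt ha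
  have hbbne : b ≠ 0 := ne_of_gt hb
  have h2 : (a - b) * (1 + d / (a * b)) = 0 := by
    field_simp at h ⊢
    nlinarith
  have hpos : 0 < 1 + d / (a * b) := by positivity
  rcases mul_eq_zero.mp h2 with h' | h'
  · linarith
  · linarith

lemma glasser_total {d : ℝ} (hd : 0 < d) :
    ∫ x in Set.Ioi (0:ℝ), (1 + d / x ^ 2) * Real.exp (-(x - d / x) ^ 2) = Real.sqrt π := by
  have h := integral_image_eq_integral_abs_deriv_smul measurableSet_Ioi
    (fun x hx => hasDeriv_sub_div (d := d) hx) (injOn_sub_div hd)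
    (fun y => Real.exp (-y ^ 2))
  rw [image_sub_div hd, Measure.restrict_univ] at h
  have hg : ∫ x : ℝ, Real.exp (-x ^ 2) = Real.sqrt π := by
    simpa using integral_gaussian 1
  rw [hg] at h
  rw [show ∫ x in Set.Ioi (0:ℝ), (1 + d / x ^ 2) * Real.exp (-(x - d / x) ^ 2)
      = ∫ x in Set.Ioi (0:ℝ), |1 + d / x ^ 2| • Real.exp (-(x - d / x) ^ 2) from
    setIntegral_congr_fun measurableSet_Ioi (fun x hx => by
      have hx : (0:ℝ) < x := hx
      rw [abs_of_pos (by positivity), smul_eq_mul])]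
  exact h.symm

lemma glasser_int {d : ℝ} (hd : 0 < d) :
    IntegrableOn (fun x => (1 + d / x ^ 2) * Real.exp (-(x - d / x) ^ 2)) (Set.Ioi (0:ℝ)) := by
  have h := (integrableOn_image_iff_integrableOn_abs_deriv_smul measurableSet_Ioi
    (fun x hx => hasDeriv_sub_div (d := d) hx) (injOn_sub_div hd)
    (fun y => Real.exp (-y ^ 2))).mp
  rw [image_sub_div hd] at h
  have hg : IntegrableOn (fun x : ℝ => Real.exp (-x ^ 2)) Set.univ := by
    rw [integrableOn_univ]
    simpa using integrable_exp_neg_mul_sq (show (0:ℝ) < 1 by norm_num)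
  refine (h hg).congr_fun (fun x hx => ?_) measurableSet_Ioi
  have hx : (0:ℝ) < x := hx
  beta_reduce
  rw [abs_of_pos (by positivity), smul_eq_mul]

lemma image_div_self {d : ℝ} (hd : 0 < d) :
    (fun x : ℝ => d / x) '' Set.Ioi 0 = Set.Ioi 0 := by
  ext t
  constructor
  · rintro ⟨x, hx, rfl⟩
    exact div_pos hd hx
  · intro ht
    exact ⟨d / t, div_pos hd ht, by field_simp⟩

lemma glasser_reflect {d : ℝ} (hd : 0 < d) :
    ∫ x in Set.Ioi (0:ℝ), Real.exp (-(x - d / x) ^ 2)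
      = ∫ x in Set.Ioi (0:ℝ), (d / x ^ 2) * Real.exp (-(x - d / x) ^ 2) := by
  have hderiv : ∀ x ∈ Set.Ioi (0:ℝ),
      HasDerivWithinAt (fun x : ℝ => d / x) (-(d / x ^ 2)) (Set.Ioi 0) x := by
    intro x hx
    have hx0 : x ≠ 0 := ne_of_gt hx
    have h : HasDerivAt (fun x : ℝ => d / x) ((0 * x - d * 1) / x ^ 2) x :=
      (hasDerivAt_const x d).div (hasDerivAt_id x) hx0
    have : (0 * x - d * 1) / x ^ 2 = -(d / x ^ 2) := by ring
    exact (this ▸ h).hasDerivWithinAt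
  have key : ∀ x : ℝ, 0 < x → d / (d / x) = x := fun x hx => by
    rw [div_div_eq_mul_div, mul_comm, mul_div_assoc, div_self (ne_of_gt hd), mul_one]
  have hinj : Set.InjOn (fun x : ℝ => d / x) (Set.Ioi 0) := by
    intro a ha b hb h
    simp only [Set.mem_Ioi] at ha hb
    simp only at h
    calc a = d / (d / a) := (key a ha).symm
      _ = d / (d / b) := by rw [h]
      _ = b := key b hb
  have h := integral_image_eq_integral_abs_deriv_smul measurableSet_Ioi hderiv hinj
    (fun x => Real.exp (-(x - d / x) ^ 2))
  rw [image_div_self hd] at h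
  rw [h]
  refine setIntegral_congr_fun measurableSet_Ioi (fun x hx => ?_)
  have hx : (0:ℝ) < x := hx
  have hx0 : x ≠ 0 := ne_of_gt hx
  rw [abs_neg, abs_of_pos (by positivity), smul_eq_mul,
    key x hx, show (-(d / x - x) ^ 2 : ℝ) = -(x - d / x) ^ 2 by ring]

lemma glasser_half {d : ℝ} (hd : 0 < d) :
    ∫ x in Set.Ioi (0:ℝ), Real.exp (-(x - d / x) ^ 2) = Real.sqrt π / 2 := by
  have hmeas : AEStronglyMeasurable (fun x : ℝ => Real.exp (-(x - d / x) ^ 2))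
      (volume.restrict (Set.Ioi 0)) := by
    apply Measurable.aestronglyMeasurable
    exact (((measurable_id.sub (measurable_const.div measurable_id)).pow_const 2).neg).exp
  have hmeas2 : AEStronglyMeasurable (fun x : ℝ => (d / x ^ 2) * Real.exp (-(x - d / x) ^ 2))
      (volume.restrict (Set.Ioi 0)) := by
    apply Measurable.aestronglyMeasurable
    exact ((measurable_const.div (measurable_id.pow_const 2)).mul
      (((measurable_id.sub (measurable_const.div measurable_id)).pow_const 2).neg).exp)
  have hbound : ∀ᵐ x ∂(volume.restrict (Set.Ioi (0:ℝ))), ∀ P ∈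
      ({fun x : ℝ => Real.exp (-(x - d / x) ^ 2),
        fun x : ℝ => (d / x ^ 2) * Real.exp (-(x - d / x) ^ 2)} : Set (ℝ → ℝ)),
      ‖P x‖ ≤ (1 + d / x ^ 2) * Real.exp (-(x - d / x) ^ 2) := by
    filter_upwards [ae_restrict_mem measurableSet_Ioi] with x hx
    have hx : (0:ℝ) < x := hx
    rintro P hP
    have h1 : 0 < 1 + d / x ^ 2 := by positivity
    rcases hP with rfl | rfl
    · rw [Real.norm_eq_abs, abs_of_pos (Real.exp_pos _)]
      nlinarith [Real.exp_pos (-(x - d / x) ^ 2), div_pos hd (by positivity : (0:ℝ) < x ^ 2)]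
    · simp only [Set.mem_singleton_iff] at *
      rw [Real.norm_eq_abs, abs_of_pos (by positivity)]
      nlinarith [Real.exp_pos (-(x - d / x) ^ 2)]
  have hint1 : IntegrableOn (fun x : ℝ => Real.exp (-(x - d / x) ^ 2)) (Set.Ioi 0) := by
    refine (glasser_int hd).mono' hmeas ?_
    filter_upwards [hbound] with x hx using hx _ (Set.mem_insert _ _)
  have hint2 : IntegrableOn (fun x : ℝ => (d / x ^ 2) * Real.exp (-(x - d / x) ^ 2))
      (Set.Ioi 0) := by
    refine (glasser_int hd).mono' hmeas2 ?_
    filter_upwards [hbound] with x hx using hx _ (Set.mem_insert_of_mem _ rfl)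
  have hsplit : ∫ x in Set.Ioi (0:ℝ), (1 + d / x ^ 2) * Real.exp (-(x - d / x) ^ 2)
      = (∫ x in Set.Ioi (0:ℝ), Real.exp (-(x - d / x) ^ 2))
        + ∫ x in Set.Ioi (0:ℝ), (d / x ^ 2) * Real.exp (-(x - d / x) ^ 2) := by
    rw [← integral_add hint1 hint2]
    refine setIntegral_congr_fun measurableSet_Ioi (fun x hx => ?_)
    ring
  have := glasser_total hd
  rw [hsplit, ← glasser_reflect hd] at this
  linarith

lemma glasser_main {c : ℝ} (hc : 0 < c) :
    ∫ x in Set.Ioi (0:ℝ), Real.exp (-(x ^ 2 + c / x ^ 2))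
      = Real.sqrt π / 2 * Real.exp (-(2 * Real.sqrt c)) := by
  set d := Real.sqrt c with hdd
  have hd : 0 < d := Real.sqrt_pos.mpr hc
  have hd2 : d ^ 2 = c := Real.sq_sqrt hc.le
  have : ∀ x ∈ Set.Ioi (0:ℝ),
      Real.exp (-(x ^ 2 + c / x ^ 2))
        = Real.exp (-(2 * d)) * Real.exp (-(x - d / x) ^ 2) := by
    intro x hx
    have hx : (0:ℝ) < x := hx
    rw [← Real.exp_add]
    congr 1
    have hx0 : x ≠ 0 := ne_of_gt hx
    field_simp
    nlinarith
  rw [setIntegral_congr_fun measurableSet_Ioi this, integral_const_mul, glasser_half hd]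
  ring

lemma bessel_integral {a b : ℝ} (ha : 0 < a) (hb : 0 < b) :
    ∫ t in Set.Ioi (0:ℝ), (t * Real.sqrt t)⁻¹ * Real.exp (-(a * t + b / t))
      = Real.sqrt (π / b) * Real.exp (-(2 * Real.sqrt (a * b))) := by
  have hderiv : ∀ x ∈ Set.Ioi (0:ℝ),
      HasDerivWithinAt (fun x : ℝ => b / x ^ 2) (-(2 * b / x ^ 3)) (Set.Ioi 0) x := by
    intro x hx
    have hx : (0:ℝ) < x := hx
    have h : HasDerivAt (fun x : ℝ => b / x ^ 2)
        ((0 * x ^ 2 - b * (↑2 * x ^ 1)) / (x ^ 2) ^ 2) x :=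
      (hasDerivAt_const x b).div (hasDerivAt_pow 2 x) (by positivity)
    have he : (0 * x ^ 2 - b * (↑2 * x ^ 1)) / (x ^ 2) ^ 2 = -(2 * b / x ^ 3) := by
      field_simp
      ring
    exact (he ▸ h).hasDerivWithinAt
  have hinj : Set.InjOn (fun x : ℝ => b / x ^ 2) (Set.Ioi 0) := by
    intro x hx y hy h
    simp only [Set.mem_Ioi] at hx hy
    simp only at h
    have kx : x ^ 2 = b / (b / x ^ 2) := by field_simp
    have ky : y ^ 2 = b / (b / y ^ 2) := by field_simp
    have hx2 : x ^ 2 = y ^ 2 := by rw [kx, h, ← ky]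
    nlinarith
  have himg : (fun x : ℝ => b / x ^ 2) '' Set.Ioi 0 = Set.Ioi 0 := by
    ext t
    constructor
    · rintro ⟨x, hx, rfl⟩
      simp only [Set.mem_Ioi] at hx ⊢
      positivity
    · intro ht
      simp only [Set.mem_Ioi] at ht
      refine ⟨Real.sqrt (b / t), by simp [Real.sqrt_pos]; positivity, ?_⟩
      simp only
      rw [Real.sq_sqrt (by positivity)]
      field_simp
  have h := integral_image_eq_integral_abs_deriv_smul measurableSet_Ioi hderiv hinj
    (fun t => (t * Real.sqrt t)⁻¹ * Real.exp (-(a * t + b / t)))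
  rw [himg] at h
  rw [h]
  have hcong : ∀ x ∈ Set.Ioi (0:ℝ),
      |(-(2 * b / x ^ 3))| • ((b / x ^ 2 * Real.sqrt (b / x ^ 2))⁻¹
          * Real.exp (-(a * (b / x ^ 2) + b / (b / x ^ 2))))
        = (2 / Real.sqrt b) * Real.exp (-(x ^ 2 + a * b / x ^ 2)) := by
    intro x hx
    have hx : (0:ℝ) < x := hx
    have hsb : Real.sqrt (b / x ^ 2) = Real.sqrt b / x := by
      rw [Real.sqrt_div hb.le, Real.sqrt_sq hx.le]
    have hb2 : b / (b / x ^ 2) = x ^ 2 := by field_simp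
    rw [abs_neg, abs_of_pos (by positivity), smul_eq_mul, hsb, hb2]
    have hsbpos : 0 < Real.sqrt b := Real.sqrt_pos.mpr hb
    rw [show (-(a * (b / x ^ 2) + x ^ 2) : ℝ) = -(x ^ 2 + a * b / x ^ 2) by ring,
      ← mul_assoc]
    congr 1
    have hq : b / x ^ 2 * (Real.sqrt b / x) = b * Real.sqrt b / x ^ 3 := by ring
    rw [hq, inv_div]
    field_simp
  rw [setIntegral_congr_fun measurableSet_Ioi hcong, integral_const_mul, glasser_main (by positivity : (0:ℝ) < a * b)]
  have h2 : Real.sqrt (π / b) = 2 / Real.sqrt b * (Real.sqrt π / 2) := by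
    rw [Real.sqrt_div Real.pi_pos.le]
    ring
  rw [h2]
  ring

lemma ig_laplace {ν κ s : ℝ} (hν : 0 < ν) (hκ : 0 < κ) (hs : 0 ≤ s) :
    ∫ t in Set.Ioi (0:ℝ), igDensity ν κ t * Real.exp (-(s * t))
      = Real.exp (κ / ν - Real.sqrt (κ ^ 2 / ν ^ 2 + 2 * κ * s)) := by
  set a : ℝ := κ / (2 * ν ^ 2) + s with ha_def
  set b : ℝ := κ / 2 with hb_def
  have ha : 0 < a := by positivity
  have hb : 0 < b := by positivity
  have hcong : ∀ t ∈ Set.Ioi (0:ℝ),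
      igDensity ν κ t * Real.exp (-(s * t))
        = (Real.sqrt (κ / (2 * π)) * Real.exp (κ / ν))
            * ((t * Real.sqrt t)⁻¹ * Real.exp (-(a * t + b / t))) := by
    intro t ht
    have ht : (0:ℝ) < t := ht
    rw [igDensity, if_pos ht]
    have h1 : Real.sqrt (κ / (2 * π * t ^ 3)) = Real.sqrt (κ / (2 * π)) * (t * Real.sqrt t)⁻¹ := by
      rw [show κ / (2 * π * t ^ 3) = (κ / (2 * π)) / t ^ 3 by ring,
        Real.sqrt_div (by positivity), show (t:ℝ) ^ 3 = t ^ 2 * t by ring,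
        Real.sqrt_mul (by positivity), Real.sqrt_sq ht.le]
      rw [div_eq_mul_inv]
    have h2 : Real.exp (-(κ * (t - ν) ^ 2) / (2 * ν ^ 2 * t)) * Real.exp (-(s * t))
        = Real.exp (κ / ν) * Real.exp (-(a * t + b / t)) := by
      rw [← Real.exp_add, ← Real.exp_add]
      congr 1
      have hν' : (ν:ℝ) ≠ 0 := ne_of_gt hν
      have ht' : (t:ℝ) ≠ 0 := ne_of_gt ht
      rw [ha_def, hb_def]
      field_simp
      ring
    calc Real.sqrt (κ / (2 * π * t ^ 3)) * Real.exp (-(κ * (t - ν) ^ 2) / (2 * ν ^ 2 * t))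
          * Real.exp (-(s * t))
        = Real.sqrt (κ / (2 * π * t ^ 3))
          * (Real.exp (-(κ * (t - ν) ^ 2) / (2 * ν ^ 2 * t)) * Real.exp (-(s * t))) := by ring
      _ = (Real.sqrt (κ / (2 * π)) * (t * Real.sqrt t)⁻¹)
          * (Real.exp (κ / ν) * Real.exp (-(a * t + b / t))) := by rw [h1, h2]
      _ = _ := by ring
  rw [setIntegral_congr_fun measurableSet_Ioi hcong, integral_const_mul,
    bessel_integral ha hb]
  have hc1 : Real.sqrt (κ / (2 * π)) * Real.sqrt (π / b) = 1 := by
    rw [← Real.sqrt_mul (by positivity)]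
    rw [show κ / (2 * π) * (π / b) = κ / (2 * b) by field_simp [Real.pi_ne_zero]]
    rw [hb_def]
    rw [show κ / (2 * (κ / 2)) = 1 by field_simp]
    exact Real.sqrt_one
  have hc2 : 2 * Real.sqrt (a * b) = Real.sqrt (κ ^ 2 / ν ^ 2 + 2 * κ * s) := by
    have he : κ ^ 2 / ν ^ 2 + 2 * κ * s = 2 ^ 2 * (a * b) := by
      have hν' : (ν:ℝ) ≠ 0 := ne_of_gt hν
      rw [ha_def, hb_def]
      field_simp
    rw [he, Real.sqrt_mul (show (0:ℝ) ≤ 2 ^ 2 by norm_num),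
      show Real.sqrt ((2:ℝ) ^ 2) = 2 from Real.sqrt_sq (by norm_num),
      Real.sqrt_mul ha.le]
  calc Real.sqrt (κ / (2 * π)) * Real.exp (κ / ν)
        * (Real.sqrt (π / b) * Real.exp (-(2 * Real.sqrt (a * b))))
      = (Real.sqrt (κ / (2 * π)) * Real.sqrt (π / b))
        * (Real.exp (κ / ν) * Real.exp (-(2 * Real.sqrt (a * b)))) := by ring
    _ = Real.exp (κ / ν) * Real.exp (-(2 * Real.sqrt (a * b))) := by rw [hc1, one_mul]
    _ = _ := by rw [hc2, ← Real.exp_add]; ring_nf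

lemma gauss_char (c : ℝ) :
    ∫ z : ℝ, Complex.exp (Complex.I * ((c * z : ℝ) : ℂ)) ∂(gaussianReal 0 1)
      = Complex.exp (((-(c ^ 2) / 2 : ℝ) : ℂ)) := by
  rw [gaussianReal_of_var_ne_zero 0 one_ne_zero]
  have hmeas : Measurable fun x : ℝ => (gaussianPDFReal 0 1 x).toNNReal :=
    (measurable_gaussianPDFReal 0 1).real_toNNReal
  have hdens : (volume : Measure ℝ).withDensity (gaussianPDF 0 1)
      = (volume : Measure ℝ).withDensity
          (fun x : ℝ => (((gaussianPDFReal 0 1 x).toNNReal : ℝ≥0) : ℝ≥0∞)) := rfl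
  rw [hdens, integral_withDensity_eq_integral_smul hmeas]
  have hpt : ∀ x : ℝ, (gaussianPDFReal 0 1 x).toNNReal • Complex.exp (Complex.I * ((c * x : ℝ) : ℂ))
      = (((Real.sqrt (2 * π))⁻¹ : ℝ) : ℂ)
          * Complex.exp ((-(1/2) : ℂ) * (x:ℂ) ^ 2 + (Complex.I * c) * x + 0) := by
    intro x
    rw [NNReal.smul_def, Real.coe_toNNReal _ (gaussianPDFReal_nonneg 0 1 x), gaussianPDFReal]
    rw [show ((x:ℝ) - 0) ^ 2 = x ^ 2 by ring]
    rw [Complex.real_smul]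
    push_cast
    rw [mul_assoc]
    congr 1
    · norm_num
    · rw [← Complex.exp_add]
      congr 1
      push_cast
      ring
  simp_rw [hpt]
  rw [integral_const_mul, integral_cexp_quadratic (by norm_num : (-(1/2):ℂ).re < 0)]
  have h1 : ((π:ℂ) / -(-(1/2))) = ((2*π : ℝ):ℂ) := by push_cast; ring
  have h2 : ((2*π : ℝ):ℂ) ^ (1/2 : ℂ) = ((Real.sqrt (2*π) : ℝ) : ℂ) := by
    rw [Real.sqrt_eq_rpow]
    rw [Complex.ofReal_cpow (by positivity) (1/2)]
    norm_num
  have h3 : ((0:ℂ) - (Complex.I * c) ^ 2 / (4 * -(1/2))) = ((-(c ^ 2) / 2 : ℝ) : ℂ) := by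
    have : (Complex.I * c) ^ 2 = -((c:ℂ) ^ 2) := by
      rw [mul_pow, Complex.I_sq]; ring
    rw [this]
    push_cast
    ring
  rw [h1, h2, h3, ← mul_assoc, ← Complex.ofReal_mul,
    inv_mul_cancel₀ (ne_of_gt (Real.sqrt_pos.mpr (by positivity))), Complex.ofReal_one, one_mul]

lemma gauss_pi_char (p : ℕ) (c : Fin p → ℝ) :
    ∫ z : Fin p → ℝ, Complex.exp (Complex.I * ((∑ i, c i * z i : ℝ) : ℂ))
        ∂(Measure.pi fun _ : Fin p => gaussianReal 0 1)
      = Complex.exp (((-(∑ i, (c i) ^ 2) / 2 : ℝ) : ℂ)) := by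
  letI : MeasureSpace ℝ := ⟨gaussianReal 0 1⟩
  haveI : SigmaFinite (volume : Measure ℝ) := inferInstanceAs (SigmaFinite (gaussianReal 0 1))
  have hvol : (Measure.pi fun _ : Fin p => gaussianReal 0 1)
      = (volume : Measure (Fin p → ℝ)) := rfl
  rw [hvol]
  have hpt : ∀ z : Fin p → ℝ, Complex.exp (Complex.I * ((∑ i, c i * z i : ℝ) : ℂ))
      = ∏ i, Complex.exp (Complex.I * ((c i * z i : ℝ) : ℂ)) := by
    intro z
    rw [← Complex.exp_sum]
    congr 1
    push_cast
    rw [Finset.mul_sum]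
  simp_rw [hpt]
  erw [MeasureTheory.integral_fintype_prod_eq_prod (f := fun (i : Fin p) (x : ℝ) =>
    Complex.exp (Complex.I * ((c i * x : ℝ) : ℂ))) (μ := fun _ => (volume : Measure ℝ))]
  have : ∀ i : Fin p, (∫ x : ℝ, Complex.exp (Complex.I * ((c i * x : ℝ) : ℂ)))
      = Complex.exp (((-((c i) ^ 2) / 2 : ℝ) : ℂ)) := fun i => gauss_char (c i)
  rw [Finset.prod_congr rfl (fun i _ => this i), ← Complex.exp_sum]
  congr 1
  push_cast
  rw [← Finset.sum_div, ← Finset.sum_neg_distrib]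

lemma integral_coe_complex {α : Type*} [MeasurableSpace α] (μ : Measure α) (f : α → ℝ) :
    ∫ x, ((f x : ℝ) : ℂ) ∂μ = ((∫ x, f x ∂μ : ℝ) : ℂ) :=
  integral_ofReal

end Aux

lemma igDensity_nonneg (ν κ t : ℝ) : 0 ≤ igDensity ν κ t := by
  rw [igDensity]
  split
  · positivity
  · exact le_refl 0

lemma igDensity_measurable (ν κ : ℝ) : Measurable (igDensity ν κ) := by
  unfold igDensity
  refine Measurable.ite (measurableSet_lt measurable_const measurable_id) ?_ measurable_const
  exact (Real.continuous_sqrt.measurable.comp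
      (measurable_const.div ((measurable_id.pow_const 3).const_mul (2 * π)))).mul
    (Real.measurable_exp.comp
      ((((measurable_id.sub_const ν).pow_const 2).const_mul κ).neg.div
        (measurable_id.const_mul (2 * ν ^ 2))))

/-- for `T ~ IG(λ/μ, λ²/σ²)`, `Z ~ N(0, I_p)` independent of `T`, and
`N = σ√T·Z`, the characteristic function of `N` is
`Φ_N(ω) = exp(−λ(√(u² + ‖ω‖²) − u))` with `u = μ/σ²`. -/
theorem ndfhl_characteristic_function
    {Ω : Type*} [MeasurableSpace Ω] (P : Measure Ω) [IsProbabilityMeasure P]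
    (p : ℕ) (hp : 1 ≤ p) (lam mu σ : ℝ) (hlam : 0 < lam) (hmu : 0 < mu) (hσ : 0 < σ)
    (T : Ω → ℝ) (Z : Ω → Fin p → ℝ) (hTmeas : Measurable T) (hZmeas : Measurable Z)
    (hTlaw : P.map T
      = MeasureTheory.volume.withDensity
          (fun t => ENNReal.ofReal (igDensity (lam / mu) (lam ^ 2 / σ ^ 2) t)))
    (hZlaw : P.map Z = Measure.pi fun _ : Fin p => gaussianReal 0 1)
    (hindep : IndepFun T Z P) :
    ∀ w : Fin p → ℝ,
      ∫ x, Complex.exp (Complex.I * ((∑ i, w i * (σ * Real.sqrt (T x) * Z x i) : ℝ) : ℂ)) ∂P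
        = Complex.exp (-((lam : ℂ) *
            ((Real.sqrt ((mu / σ ^ 2) ^ 2 + ∑ i, w i ^ 2) - mu / σ ^ 2 : ℝ) : ℂ))) := by
  intro w
  set ν : ℝ := lam / mu with hν_def
  set κ : ℝ := lam ^ 2 / σ ^ 2 with hκ_def
  have hν : 0 < ν := by positivity
  have hκ : 0 < κ := by positivity
  set K : ℝ := ∑ i, w i ^ 2 with hK_def
  have hKnn : 0 ≤ K := Finset.sum_nonneg fun i _ => sq_nonneg _
  set s : ℝ := σ ^ 2 * K / 2 with hs_def
  have hs : 0 ≤ s := by positivity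
  set g : ℝ × (Fin p → ℝ) → ℂ :=
    fun q => Complex.exp (Complex.I * ((∑ i, w i * (σ * Real.sqrt q.1 * q.2 i) : ℝ) : ℂ)) with hg
  have hgmeas : Measurable g := by
    apply Complex.measurable_exp.comp
    apply Measurable.const_mul
    apply Complex.measurable_ofReal.comp
    apply Finset.measurable_sum
    intro i _
    exact measurable_const.mul
      ((measurable_const.mul (Real.continuous_sqrt.measurable.comp measurable_fst)).mul
        ((measurable_pi_apply i).comp measurable_snd))
  have hTZ : Measurable fun x => (T x, Z x) := hTmeas.prodMk hZmeas
  haveI : IsProbabilityMeasure (P.map T) := Measure.isProbabilityMeasure_map hTmeas.aemeasurable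
  haveI : IsProbabilityMeasure (P.map Z) := Measure.isProbabilityMeasure_map hZmeas.aemeasurable
  have hmaps : P.map (fun x => (T x, Z x)) = (P.map T).prod (P.map Z) :=
    (ProbabilityTheory.indepFun_iff_map_prod_eq_prod_map_map hTmeas.aemeasurable
      hZmeas.aemeasurable).mp hindep
  have hgint : Integrable g ((P.map T).prod (P.map Z)) := by
    refine Integrable.mono' (integrable_const 1) hgmeas.aestronglyMeasurable ?_
    filter_upwards with q
    rw [hg]
    simp only
    rw [Complex.norm_exp]
    have hre : (Complex.I * ((∑ i, w i * (σ * Real.sqrt q.1 * q.2 i) : ℝ) : ℂ)).re = 0 := by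
      simp [Complex.mul_re]
    rw [hre, Real.exp_zero]
  have h1 : ∫ x, Complex.exp (Complex.I
        * ((∑ i, w i * (σ * Real.sqrt (T x) * Z x i) : ℝ) : ℂ)) ∂P
      = ∫ q, g q ∂(P.map fun x => (T x, Z x)) := by
    rw [integral_map hTZ.aemeasurable hgmeas.aestronglyMeasurable]
  rw [h1, hmaps, MeasureTheory.integral_prod _ hgint, hZlaw]
  have hinner : ∀ t : ℝ, (∫ z, g (t, z) ∂(Measure.pi fun _ : Fin p => gaussianReal 0 1))
      = Complex.exp (((-(∑ i, (w i * (σ * Real.sqrt t)) ^ 2) / 2 : ℝ) : ℂ)) := by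
    intro t
    rw [← gauss_pi_char p (fun i => w i * (σ * Real.sqrt t))]
    apply integral_congr_ae
    filter_upwards with z
    rw [hg]
    simp only
    congr 2
    push_cast
    apply Finset.sum_congr rfl
    intro i _
    ring
  simp_rw [hinner]
  rw [hTlaw]
  have hmeasig : Measurable fun t => (igDensity ν κ t).toNNReal :=
    (igDensity_measurable ν κ).real_toNNReal
  have hd : (volume : Measure ℝ).withDensity (fun t => ENNReal.ofReal (igDensity ν κ t))
      = (volume : Measure ℝ).withDensity
          (fun t => (((igDensity ν κ t).toNNReal : ℝ≥0) : ℝ≥0∞)) := rfl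
  rw [hd, integral_withDensity_eq_integral_smul hmeasig]
  have hzero : ∀ t : ℝ, t ∉ Set.Ioi (0:ℝ) →
      (igDensity ν κ t).toNNReal • Complex.exp (((-(∑ i, (w i * (σ * Real.sqrt t)) ^ 2) / 2 : ℝ) : ℂ)) = 0 := by
    intro t ht
    have : igDensity ν κ t = 0 := by
      rw [igDensity, if_neg (by simpa using ht)]
    rw [this]
    simp
  rw [← setIntegral_eq_integral_of_forall_compl_eq_zero hzero]
  have hcong : ∀ t ∈ Set.Ioi (0:ℝ),
      (igDensity ν κ t).toNNReal • Complex.exp (((-(∑ i, (w i * (σ * Real.sqrt t)) ^ 2) / 2 : ℝ) : ℂ))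
        = (((igDensity ν κ t * Real.exp (-(s * t)) : ℝ)) : ℂ) := by
    intro t ht
    have ht : (0:ℝ) < t := ht
    rw [NNReal.smul_def, Real.coe_toNNReal _ (igDensity_nonneg ν κ t), Complex.real_smul]
    rw [Complex.ofReal_mul]
    congr 1
    rw [← Complex.ofReal_exp]
    congr 1
    have hsum : (∑ i, (w i * (σ * Real.sqrt t)) ^ 2) = σ ^ 2 * K * t := by
      have h : ∀ i, (w i * (σ * Real.sqrt t)) ^ 2 = w i ^ 2 * (σ ^ 2 * t) := by
        intro i
        rw [mul_pow, mul_pow, Real.sq_sqrt ht.le]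
      rw [Finset.sum_congr rfl fun i _ => h i, ← Finset.sum_mul]
      ring
    rw [hsum, hs_def]
    ring
  rw [setIntegral_congr_fun measurableSet_Ioi hcong, integral_coe_complex, ig_laplace hν hκ hs]
  rw [Complex.ofReal_exp]
  congr 1
  rw [← Complex.ofReal_mul, ← Complex.ofReal_neg]
  congr 1
  -- real identity
  set u : ℝ := mu / σ ^ 2 with hu_def
  have h2 : κ / ν = lam * u := by
    rw [hκ_def, hν_def, hu_def]
    field_simp
  have h3 : κ ^ 2 / ν ^ 2 + 2 * κ * s = lam ^ 2 * (u ^ 2 + K) := by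
    rw [hκ_def, hν_def, hs_def, hu_def]
    field_simp
  rw [h2, h3, Real.sqrt_mul (sq_nonneg lam), Real.sqrt_sq hlam.le]
  ring
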